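/- Suppose A ∈ 𝓑 is a small set, with positive integer k, probability measure ν and β > 0 such that P^k(x,·) ≥ β ν for all x ∈ A, and suppose ℙ^x(T_A < ∞) = 1 for all x ∈ S. Then the chain is ν-recurrent: for every B ∈ 𝓑 with ν(B) > 0 and every x ∈ S, ℙ^x(T_B < ∞) = 1. -/

import Mathlib

open MeasureTheory ProbabilityTheory
open scoped ENNReal NNReal

noncomputable section

/-- The hitting time `T_A = inf {n ≥ 1 : ω n ∈ A}`, with value `⊤ : ℕ∞` if no such `n` exists. -/
def hitTime {S : Type*} (A : Set S) (ω : ℕ → S) : ℕ∞ :=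
  sInf ((fun k : ℕ => (k : ℕ∞)) '' {k : ℕ | 1 ≤ k ∧ ω k ∈ A})

/-- `IsMarkovPath K μ₀ L` says that `L` is the law on path space `ℕ → E` of the
time-homogeneous Markov chain with transition kernel `K` and initial distribution `μ₀`
(the measure produced by the Ionescu–Tulcea construction), characterized through its
finite-dimensional distributions. -/
def IsMarkovPath {E : Type*} [MeasurableSpace E] (K : Kernel E E) (μ₀ : Measure E)
    (L : Measure (ℕ → E)) : Prop :=
  IsProbabilityMeasure L ∧
    L.map (fun ω => ω 0) = μ₀ ∧
    ∀ n : ℕ,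
      L.map (fun ω => fun i : Fin (n + 2) => ω (i : ℕ)) =
        (L.map (fun ω => fun i : Fin (n + 1) => ω (i : ℕ))).bind
          (fun v => (K (v (Fin.last n))).map (Fin.snoc v))

/-- The `n`-step transition kernel `K^n`. -/
def kiter {E : Type*} [MeasurableSpace E] (K : Kernel E E) : ℕ → Kernel E E
  | 0 => Kernel.id
  | n + 1 => (kiter K n) ∘ₖ K

instance kiter.isMarkovKernel {E : Type*} [MeasurableSpace E] (K : Kernel E E)
    [IsMarkovKernel K] (n : ℕ) : IsMarkovKernel (kiter K n) := by
  induction n with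
  | zero => rw [kiter]; infer_instance
  | succ n ih => rw [kiter]; infer_instance

namespace NuRec
variable {S : Type*} [MeasurableSpace S]

lemma kiter_zero (K : Kernel S S) : kiter K 0 = Kernel.id := rfl
lemma kiter_succ (K : Kernel S S) (n : ℕ) : kiter K (n + 1) = kiter K n ∘ₖ K := rfl

instance kiter.isFiniteKernel (K : Kernel S S) [IsFiniteKernel K] (n : ℕ) :
    IsFiniteKernel (kiter K n) := by
  induction n with
  | zero => rw [kiter_zero]; infer_instance
  | succ n ih => rw [kiter_succ]; infer_instance

lemma kiter_add (K : Kernel S S) [IsFiniteKernel K] (a b : ℕ) :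
    kiter K (a + b) = kiter K a ∘ₖ kiter K b := by
  induction b with
  | zero => simp [kiter_zero, Kernel.comp_id]
  | succ b ih => rw [← Nat.add_assoc, kiter_succ, ih, kiter_succ, Kernel.comp_assoc]

lemma kiter_one (K : Kernel S S) : kiter K 1 = K := by
  rw [kiter_succ, kiter_zero, Kernel.id_comp]

lemma measurable_snoc2 {n : ℕ} :
    Measurable fun p : (Fin n → S) × S => (Fin.snoc p.1 p.2 : Fin (n + 1) → S) := by
  refine measurable_pi_lambda _ fun i => ?_
  induction i using Fin.lastCases with
  | last => simpa only [Fin.snoc_last] using measurable_snd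
  | cast j => simp only [Fin.snoc_castSucc]; exact (measurable_pi_apply j).comp measurable_fst

def stepK (P : Kernel S S) [IsMarkovKernel P] (N : ℕ) :
    Kernel (Fin (N + 1) → S) (Fin (N + 2) → S) :=
  Kernel.map (Kernel.id ×ₖ P.comap (fun v => v (Fin.last N)) (measurable_pi_apply _))
    (fun p => Fin.snoc p.1 p.2)

lemma stepK_apply (P : Kernel S S) [IsMarkovKernel P] (N : ℕ) (v : Fin (N + 1) → S) :
    stepK P N v = (P (v (Fin.last N))).map (Fin.snoc v) := by
  rw [stepK, Kernel.map_apply _ measurable_snoc2, Kernel.prod_apply, Kernel.id_apply,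
    Kernel.comap_apply, Measure.dirac_prod,
    Measure.map_map measurable_snoc2 measurable_prodMk_left]
  rfl

lemma measurable_init {n : ℕ} : Measurable (Fin.init : (Fin (n + 1) → S) → (Fin n → S)) :=
  measurable_pi_lambda _ fun i => measurable_pi_apply _

/-- The cylinder sets "`D` on the first `n+1` coordinates, then avoid `B` for `m` steps". -/
def Dseq (B : Set S) {n : ℕ} (D : Set (Fin (n + 1) → S)) : (m : ℕ) → Set (Fin (n + m + 1) → S)
  | 0 => D
  | m + 1 => Fin.init ⁻¹' Dseq B D m ∩ {w | w (Fin.last (n + m + 1)) ∈ Bᶜ}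

lemma measurableSet_Dseq {B : Set S} (hB : MeasurableSet B) {n : ℕ}
    {D : Set (Fin (n + 1) → S)} (hD : MeasurableSet D) :
    ∀ m, MeasurableSet (Dseq B D m)
  | 0 => hD
  | m + 1 =>
    (measurable_init (measurableSet_Dseq hB hD m)).inter
      ((measurable_pi_apply _) hB.compl)

lemma preimage_Dseq (B : Set S) {n : ℕ} (D : Set (Fin (n + 1) → S)) :
    ∀ m, (fun ω : ℕ → S => fun i : Fin (n + m + 1) => ω (i : ℕ)) ⁻¹' (Dseq B D m)
      = (fun ω : ℕ → S => fun i : Fin (n + 1) => ω (i : ℕ)) ⁻¹' D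
        ∩ {ω | ∀ i : ℕ, n < i → i ≤ n + m → ω i ∈ Bᶜ} := by
  intro m
  induction m with
  | zero =>
    ext ω
    simp only [Dseq, Set.mem_preimage, Set.mem_inter_iff, Set.mem_setOf_eq]
    exact ⟨fun h => ⟨h, fun i h1 h2 => absurd h2 (by omega)⟩, fun h => h.1⟩
  | succ m ih =>
    ext ω
    have hinit : Fin.init (fun i : Fin (n + m + 2) => ω (i : ℕ))
        = fun i : Fin (n + m + 1) => ω (i : ℕ) := by
      funext i
      simp [Fin.init]
    constructor
    · rintro ⟨h1, h2⟩
      have h1b : Fin.init (fun i : Fin (n + m + 2) => ω (i : ℕ)) ∈ Dseq B D m := h1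
      rw [hinit] at h1b
      have h1' := ih ▸ (Set.mem_preimage.mpr h1b)
      refine ⟨h1'.1, fun i hi1 hi2 => ?_⟩
      rcases Nat.lt_or_ge i (n + m + 1) with h | h
      · exact h1'.2 i hi1 (by omega)
      · have : i = n + m + 1 := by omega
        subst this
        simpa using h2
    · rintro ⟨h1, h2⟩
      refine ⟨?_, ?_⟩
      · show Fin.init (fun i : Fin (n + m + 2) => ω (i : ℕ)) ∈ Dseq B D m
        rw [hinit]
        have : ω ∈ (fun ω : ℕ → S => fun i : Fin (n + m + 1) => ω (i : ℕ)) ⁻¹' (Dseq B D m) := by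
          rw [ih]
          exact ⟨h1, fun i hi1 hi2 => h2 i hi1 (by omega)⟩
        exact this
      · show ω ((Fin.last (n + m + 1) : Fin (n + m + 2)) : ℕ) ∈ Bᶜ
        simpa using h2 (n + m + 1) (by omega) (by omega)

lemma measurable_res (n : ℕ) :
    Measurable (fun ω : ℕ → S => fun i : Fin (n + 1) => ω (i : ℕ)) :=
  measurable_pi_lambda _ fun i => measurable_pi_apply _

theorem keyM (P : Kernel S S) [IsMarkovKernel P] {B : Set S} (hB : MeasurableSet B)
    (L : Measure (ℕ → S)) [IsProbabilityMeasure L]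
    (hrec : ∀ n : ℕ, L.map (fun ω => fun i : Fin (n + 2) => ω (i : ℕ)) =
        (L.map (fun ω => fun i : Fin (n + 1) => ω (i : ℕ))).bind
          (fun v => (P (v (Fin.last n))).map (Fin.snoc v)))
    (n : ℕ) {D : Set (Fin (n + 1) → S)} (hD : MeasurableSet D) :
    ∀ (m : ℕ) (f : S → ℝ≥0∞), Measurable f →
      ∫⁻ w in Dseq B D m, f (w (Fin.last (n + m)))
          ∂(L.map (fun ω => fun i : Fin (n + m + 1) => ω (i : ℕ)))
        = ∫⁻ v in D, ∫⁻ y, f y ∂(kiter (P.restrict hB.compl) m (v (Fin.last n)))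
          ∂(L.map (fun ω => fun i : Fin (n + 1) => ω (i : ℕ))) := by
  intro m
  induction m with
  | zero =>
    intro f hf
    show ∫⁻ w in D, f (w (Fin.last n)) ∂(L.map (fun ω => fun i : Fin (n + 1) => ω (i : ℕ))) = _
    refine (lintegral_congr fun v => ?_).symm
    rw [kiter_zero, Kernel.id_apply, lintegral_dirac' _ hf]
  | succ m ih =>
    intro f hf
    have hDm := measurableSet_Dseq hB hD m
    have hDm1 : @MeasurableSet (Fin (n + m + 2) → S) _ (Dseq B D (m + 1)) :=
      measurableSet_Dseq hB hD (m + 1)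
    -- abbreviations
    set PB := P.restrict hB.compl with hPBdef
    -- rewrite the top-level measure using the Markov recursion
    show ∫⁻ w in Dseq B D (m + 1), f (w (Fin.last (n + m + 1)))
        ∂(L.map (fun ω => fun i : Fin (n + m + 2) => ω (i : ℕ))) = _
    rw [hrec (n + m)]
    have hstep : (fun v : Fin (n + m + 1) → S => (P (v (Fin.last (n + m)))).map (Fin.snoc v))
        = ⇑(stepK P (n + m)) := funext fun v => (stepK_apply P (n + m) v).symm
    rw [hstep]
    rw [← lintegral_indicator hDm1]
    have hg : Measurable fun w : Fin (n + m + 2) → S =>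
        (Dseq B D (m + 1)).indicator (fun w => f (w (Fin.last (n + m + 1)))) w :=
      Measurable.indicator (hf.comp (measurable_pi_apply _)) hDm1
    have hbind := Measure.lintegral_bind
      (m := L.map (fun ω => fun i : Fin (n + m + 1) => ω (i : ℕ)))
      (stepK P (n + m)).measurable.aemeasurable hg.aemeasurable
    refine hbind.trans ?_
    -- compute the inner integral
    have key : ∀ v : Fin (n + m + 1) → S,
        ∫⁻ w, (Dseq B D (m + 1)).indicator (fun w => f (w (Fin.last (n + m + 1)))) w
            ∂(stepK P (n + m) v)
        = (Dseq B D m).indicator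
            (fun v' => ∫⁻ y, f y ∂(PB (v' (Fin.last (n + m))))) v := by
      intro v
      have hsnocv : Measurable fun z : S => (Fin.snoc v z : Fin (n + m + 2) → S) := by
        exact measurable_snoc2.comp measurable_prodMk_left
      rw [stepK_apply, lintegral_map hg hsnocv]
      by_cases hv : v ∈ Dseq B D m
      · rw [Set.indicator_of_mem hv]
        have hz : ∀ z : S, (Dseq B D (m + 1)).indicator
            (fun w => f (w (Fin.last (n + m + 1)))) (Fin.snoc v z) = Bᶜ.indicator f z := by
          intro z
          by_cases hzB : z ∈ Bᶜ
          · have hmem : (Fin.snoc v z : Fin (n + m + 2) → S) ∈ Dseq B D (m + 1) := by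
              refine ⟨?_, ?_⟩
              · show Fin.init (Fin.snoc v z : Fin (n + m + 2) → S) ∈ Dseq B D m
                rw [Fin.init_snoc]; exact hv
              · show (Fin.snoc v z : Fin (n + m + 2) → S) (Fin.last (n + m + 1)) ∈ Bᶜ
                rw [Fin.snoc_last]; exact hzB
            rw [Set.indicator_of_mem hmem, Set.indicator_of_mem hzB, Fin.snoc_last]
          · have hmem : (Fin.snoc v z : Fin (n + m + 2) → S) ∉ Dseq B D (m + 1) := by
              intro hmem
              have h2 : (Fin.snoc v z : Fin (n + m + 2) → S) (Fin.last (n + m + 1)) ∈ Bᶜ := hmem.2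
              rw [Fin.snoc_last] at h2
              exact hzB h2
            rw [Set.indicator_of_notMem hmem, Set.indicator_of_notMem hzB]
        simp_rw [hz]
        rw [lintegral_indicator hB.compl, hPBdef, Kernel.restrict_apply]
      · rw [Set.indicator_of_notMem hv]
        have hz : ∀ z : S, (Dseq B D (m + 1)).indicator
            (fun w => f (w (Fin.last (n + m + 1)))) (Fin.snoc v z) = 0 := by
          intro z
          refine Set.indicator_of_notMem (fun hmem => hv ?_) _
          have := hmem.1
          rwa [Set.mem_preimage, Fin.init_snoc] at this
        simp_rw [hz]
        exact lintegral_zero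
    refine (lintegral_congr key).trans ?_
    rw [lintegral_indicator hDm]
    have hf' : Measurable fun y => ∫⁻ z, f z ∂(PB y) :=
      Measurable.lintegral_kernel_prod_right' (hf.comp measurable_snd)
    rw [ih (fun y => ∫⁻ z, f z ∂(PB y)) hf']
    refine lintegral_congr fun v => ?_
    have hcomp : kiter PB (m + 1) = kiter PB 1 ∘ₖ kiter PB m := by
      have := kiter_add PB 1 m
      rwa [Nat.one_add] at this
    rw [hcomp, Kernel.comp_apply, kiter_one,
      Measure.lintegral_bind PB.measurable.aemeasurable hf.aemeasurable]


theorem keyM_set (P : Kernel S S) [IsMarkovKernel P] {B : Set S} (hB : MeasurableSet B)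
    (L : Measure (ℕ → S)) [IsProbabilityMeasure L]
    (hrec : ∀ n : ℕ, L.map (fun ω => fun i : Fin (n + 2) => ω (i : ℕ)) =
        (L.map (fun ω => fun i : Fin (n + 1) => ω (i : ℕ))).bind
          (fun v => (P (v (Fin.last n))).map (Fin.snoc v)))
    (n : ℕ) {D : Set (Fin (n + 1) → S)} (hD : MeasurableSet D) (m : ℕ) :
    L ((fun ω : ℕ → S => fun i : Fin (n + 1) => ω (i : ℕ)) ⁻¹' D
        ∩ {ω | ∀ i : ℕ, n < i → i ≤ n + m → ω i ∈ Bᶜ})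
      = ∫⁻ v in D, kiter (P.restrict hB.compl) m (v (Fin.last n)) Set.univ
          ∂(L.map (fun ω => fun i : Fin (n + 1) => ω (i : ℕ))) := by
  rw [← preimage_Dseq B D m,
    ← Measure.map_apply (measurable_res (n + m)) (measurableSet_Dseq hB hD m),
    ← setLIntegral_one]
  rw [keyM P hB L hrec n hD m (fun _ => 1) measurable_const]
  refine setLIntegral_congr_fun hD ?_
  intro v _; beta_reduce
  rw [lintegral_one]

lemma hitTime_eq_top_iff {A : Set S} {ω : ℕ → S} :
    hitTime A ω = ⊤ ↔ ∀ i : ℕ, 1 ≤ i → ω i ∉ A := by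
  rw [hitTime, sInf_eq_top]
  constructor
  · intro h i hi hA
    exact (ENat.coe_ne_top i) (h _ ⟨i, ⟨hi, hA⟩, rfl⟩)
  · rintro h x ⟨i, ⟨hi, hA⟩, rfl⟩
    exact absurd hA (h i hi)

lemma hitTime_lt_top_iff {A : Set S} {ω : ℕ → S} :
    hitTime A ω < ⊤ ↔ ∃ i : ℕ, 1 ≤ i ∧ ω i ∈ A := by
  rw [lt_top_iff_ne_top, Ne, hitTime_eq_top_iff]
  push_neg
  rfl

lemma measSet_imp (p : Prop) {α β : Type*} [MeasurableSpace α] [MeasurableSpace β]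
    {f : α → β} (hf : Measurable f) {s : Set β} (hs : MeasurableSet s) :
    MeasurableSet {a | p → f a ∈ s} := by
  by_cases hp : p
  · have h : {a | p → f a ∈ s} = f ⁻¹' s := by ext a; simp [hp]
    rw [h]; exact hf hs
  · have h : {a | p → f a ∈ s} = Set.univ := by ext a; simp [hp]
    rw [h]; exact MeasurableSet.univ

lemma measSet_imp₂ (p q : Prop) {α β : Type*} [MeasurableSpace α] [MeasurableSpace β]
    {f : α → β} (hf : Measurable f) {s : Set β} (hs : MeasurableSet s) :
    MeasurableSet {a | p → q → f a ∈ s} := by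
  by_cases hp : p
  · have h : {a | p → q → f a ∈ s} = {a | q → f a ∈ s} := by ext a; simp [hp]
    rw [h]; exact measSet_imp q hf hs
  · have h : {a | p → q → f a ∈ s} = Set.univ := by ext a; simp [hp]
    rw [h]; exact MeasurableSet.univ

lemma Qadd (K : Kernel S S) [IsFiniteKernel K] (m k : ℕ) (y : S) :
    kiter K (m + k) y Set.univ = ∫⁻ z, kiter K m z Set.univ ∂(kiter K k y) := by
  rw [kiter_add K m k, Kernel.comp_apply,
    Measure.bind_apply MeasurableSet.univ (kiter K m).measurable.aemeasurable]

lemma Qsucc (K : Kernel S S) [IsFiniteKernel K] (hK : ∀ z, K z Set.univ ≤ 1) (m : ℕ) (y : S) :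
    kiter K (m + 1) y Set.univ ≤ kiter K m y Set.univ := by
  have h := Qadd K 1 m y
  rw [Nat.add_comm 1 m] at h
  rw [h]
  calc ∫⁻ z, kiter K 1 z Set.univ ∂(kiter K m y) ≤ ∫⁻ _, 1 ∂(kiter K m y) :=
      lintegral_mono fun z => by rw [kiter_one]; exact hK z
    _ = kiter K m y Set.univ := lintegral_one

lemma kiter_mono {K K' : Kernel S S} (hle : ∀ z, K z ≤ K' z) :
    ∀ (j : ℕ) (y : S), kiter K j y ≤ kiter K' j y := by
  intro j
  induction j with
  | zero => intro y; exact le_rfl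
  | succ j ih =>
    intro y
    refine Measure.le_iff.mpr fun s hs => ?_
    rw [kiter_succ, kiter_succ, Kernel.comp_apply, Kernel.comp_apply,
      Measure.bind_apply hs (kiter K j).measurable.aemeasurable,
      Measure.bind_apply hs (kiter K' j).measurable.aemeasurable]
    calc ∫⁻ z, kiter K j z s ∂(K y) ≤ ∫⁻ z, kiter K' j z s ∂(K y) :=
        lintegral_mono fun z => Measure.le_iff'.mp (ih z) s
      _ ≤ ∫⁻ z, kiter K' j z s ∂(K' y) := lintegral_mono' (hle y) le_rfl

lemma kiter_restrict_le (P : Kernel S S) [IsMarkovKernel P] {B : Set S} (hB : MeasurableSet B)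
    {k : ℕ} (hk : 1 ≤ k) (y : S) :
    kiter (P.restrict hB.compl) k y ≤ (kiter P k y).restrict Bᶜ := by
  obtain ⟨j, rfl⟩ : ∃ j, k = 1 + j := ⟨k - 1, by omega⟩
  refine Measure.le_iff.mpr fun s hs => ?_
  rw [Measure.restrict_apply hs]
  have h1 : kiter (P.restrict hB.compl) (1 + j) y s
      = ∫⁻ z, (P.restrict hB.compl) z s ∂(kiter (P.restrict hB.compl) j y) := by
    rw [kiter_add _ 1 j, Kernel.comp_apply,
      Measure.bind_apply hs (kiter (P.restrict hB.compl) 1).measurable.aemeasurable]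
    simp_rw [kiter_one]
  have h2 : kiter P (1 + j) y (s ∩ Bᶜ) = ∫⁻ z, P z (s ∩ Bᶜ) ∂(kiter P j y) := by
    rw [kiter_add _ 1 j, Kernel.comp_apply,
      Measure.bind_apply (hs.inter hB.compl) (kiter P 1).measurable.aemeasurable]
    simp_rw [kiter_one]
  rw [h1, h2]
  have hle : ∀ z, (P.restrict hB.compl) z ≤ P z := fun z => by
    rw [Kernel.restrict_apply]; exact Measure.restrict_le_self
  calc ∫⁻ z, (P.restrict hB.compl) z s ∂(kiter (P.restrict hB.compl) j y)
      = ∫⁻ z, P z (s ∩ Bᶜ) ∂(kiter (P.restrict hB.compl) j y) := by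
        simp_rw [Kernel.restrict_apply' P hB.compl _ hs]
    _ ≤ ∫⁻ z, P z (s ∩ Bᶜ) ∂(kiter P j y) := lintegral_mono' (kiter_mono hle j y) le_rfl

end NuRec

open NuRec

/-- If `A` is a small set (`P^k (x, ·) ≥ β ν` for all `x ∈ A`) whose hitting time is almost
surely finite from every starting point, then the chain is `ν`-recurrent. -/
theorem nu_recurrent_of_small_set_with_sure_hitting
    {S : Type*} [MeasurableSpace S] [MeasurableSpace.CountablyGenerated S]
    (P : Kernel S S) [IsMarkovKernel P]
    (Pr : S → Measure (ℕ → S))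
    (hPr : ∀ x : S, IsMarkovPath P (Measure.dirac x) (Pr x))
    (A : Set S) (hA : MeasurableSet A)
    (k : ℕ) (hk : 1 ≤ k) (ν : Measure S) [IsProbabilityMeasure ν]
    (β : ℝ≥0∞) (hβ : 0 < β)
    (hsmall : ∀ x ∈ A, β • ν ≤ kiter P k x)
    (hhit : ∀ x : S, Pr x {ω | hitTime A ω < ⊤} = 1) :
    ∀ B : Set S, MeasurableSet B → 0 < ν B →
      ∀ x : S, Pr x {ω | hitTime B ω < ⊤} = 1 := by
  classical
  intro B hB hνB
  set PB := P.restrict hB.compl with hPBdef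
  have hQmeas : ∀ m, Measurable fun y => kiter PB m y Set.univ :=
    fun m => (kiter PB m).measurable_coe MeasurableSet.univ
  have hPBle1 : ∀ z, PB z Set.univ ≤ 1 := fun z => by
    rw [hPBdef, Kernel.restrict_apply, Measure.restrict_apply_univ]
    exact prob_le_one
  have hQanti : ∀ y, Antitone fun m => kiter PB m y Set.univ :=
    fun y => antitone_nat_of_succ_le fun m => Qsucc PB hPBle1 m y
  set Qinf : S → ℝ≥0∞ := fun y => ⨅ m, kiter PB m y Set.univ with hQinfdef
  set u := ⨆ y, Qinf y with hudef
  have hQ0 : ∀ y, kiter PB 0 y Set.univ = 1 := fun y => by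
    rw [kiter_zero, Kernel.id_apply]; simp
  have hule : u ≤ 1 := iSup_le fun y => (iInf_le _ 0).trans (hQ0 y).le
  set ε := β * ν B with hεdef
  have hε : 0 < ε := ENNReal.mul_pos hβ.ne' hνB.ne'
  -- Step 2 : the small-set bound
  have hAbound : ∀ y ∈ A, Qinf y ≤ u * (1 - ε) := by
    intro y hy
    set ρ := (kiter P k y).restrict Bᶜ with hρdef
    have hρ : ∀ m, Qinf y ≤ ∫⁻ z, kiter PB m z Set.univ ∂ρ := by
      intro m
      refine (iInf_le _ (m + k)).trans ?_
      rw [Qadd PB m k y]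
      exact lintegral_mono' (kiter_restrict_le P hB hk y) le_rfl
    have hanti2 : Antitone fun m => fun z => kiter PB m z Set.univ :=
      fun a b hab z => hQanti z hab
    have hfin2 : ∫⁻ z, kiter PB 0 z Set.univ ∂ρ ≠ ⊤ := by
      simp_rw [hQ0]
      rw [lintegral_one]
      exact measure_ne_top ρ Set.univ
    have h2 : Qinf y ≤ ∫⁻ z, Qinf z ∂ρ :=
      (le_iInf hρ).trans_eq (lintegral_iInf hQmeas hanti2 hfin2).symm
    calc Qinf y ≤ ∫⁻ z, Qinf z ∂ρ := h2
      _ ≤ ∫⁻ _, u ∂ρ := lintegral_mono fun z => le_iSup Qinf z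
      _ = u * ρ Set.univ := lintegral_const u
      _ = u * kiter P k y Bᶜ := by rw [hρdef, Measure.restrict_apply_univ]
      _ ≤ u * (1 - ε) := by
          refine mul_le_mul_right ?_ u
          rw [prob_compl_eq_one_sub hB]
          refine tsub_le_tsub_left ?_ 1
          have h := Measure.le_iff'.mp (hsmall y hy) B
          simpa [hεdef, Measure.smul_apply, smul_eq_mul] using h
  -- Step 1 : identification of the no-hitting probability
  have hQeq : ∀ z : S, Pr z {ω : ℕ → S | ∀ i : ℕ, 1 ≤ i → ω i ∈ Bᶜ} = Qinf z := by
    intro z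
    obtain ⟨hLprob, hL0, hLrec⟩ := hPr z
    haveI := hLprob
    have hVmeas : ∀ m : ℕ, MeasurableSet
        ((fun ω : ℕ → S => fun i : Fin (0 + 1) => ω (i : ℕ)) ⁻¹' (Set.univ)
          ∩ {ω : ℕ → S | ∀ i : ℕ, 0 < i → i ≤ 0 + m → ω i ∈ Bᶜ}) := by
      intro m
      refine ((measurable_res 0) MeasurableSet.univ).inter ?_
      rw [Set.setOf_forall]
      exact MeasurableSet.iInter fun i => measSet_imp₂ _ _ (measurable_pi_apply i) hB.compl
    have hTeq : {ω : ℕ → S | ∀ i : ℕ, 1 ≤ i → ω i ∈ Bᶜ}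
        = ⋂ m : ℕ, ((fun ω : ℕ → S => fun i : Fin (0 + 1) => ω (i : ℕ)) ⁻¹' (Set.univ)
          ∩ {ω : ℕ → S | ∀ i : ℕ, 0 < i → i ≤ 0 + m → ω i ∈ Bᶜ}) := by
      ext ω
      simp only [Set.mem_setOf_eq, Set.mem_iInter, Set.mem_inter_iff, Set.mem_preimage,
        Set.mem_univ, true_and]
      constructor
      · intro h m i h1 _; exact h i h1
      · intro h i h1; exact h i i h1 (by omega)
    have hanti : Antitone fun m : ℕ =>
        ((fun ω : ℕ → S => fun i : Fin (0 + 1) => ω (i : ℕ)) ⁻¹' (Set.univ)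
          ∩ {ω : ℕ → S | ∀ i : ℕ, 0 < i → i ≤ 0 + m → ω i ∈ Bᶜ}) := by
      intro a b hab ω hω
      exact ⟨hω.1, fun i h1 h2 => hω.2 i h1 (by omega)⟩
    rw [hTeq, Antitone.measure_iInter hanti (fun m => (hVmeas m).nullMeasurableSet)
      ⟨0, measure_ne_top _ _⟩]
    refine iInf_congr fun m => ?_
    have hfm : Measurable fun v : Fin (0 + 1) → S => kiter PB m (v (Fin.last 0)) Set.univ :=
      (hQmeas m).comp (measurable_pi_apply _)
    rw [keyM_set P hB (Pr z) hLrec 0 MeasurableSet.univ m, Measure.restrict_univ,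
      lintegral_map hfm (measurable_res 0)]
    have h00 : ∫⁻ y, kiter PB m y Set.univ ∂((Pr z).map (fun ω : ℕ → S => ω 0))
        = ∫⁻ ω : ℕ → S, kiter PB m (ω 0) Set.univ ∂(Pr z) :=
      lintegral_map (hQmeas m) (measurable_pi_apply 0)
    show ∫⁻ ω : ℕ → S, kiter PB m (ω 0) Set.univ ∂(Pr z) = kiter PB m z Set.univ
    rw [← h00, hL0, lintegral_dirac' z (hQmeas m)]
  -- Step 3 : decomposition at the first hitting time of A
  have hdec : ∀ z : S, Qinf z ≤ u * (1 - ε) := by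
    intro z
    obtain ⟨hLprob, hL0, hLrec⟩ := hPr z
    haveI := hLprob
    rw [← hQeq z]
    set Aev := {ω : ℕ → S | ∃ i : ℕ, 1 ≤ i ∧ ω i ∈ A} with hAevdef
    have hAevmeas : MeasurableSet Aev := by
      rw [hAevdef, Set.setOf_exists]
      refine MeasurableSet.iUnion fun i => ?_
      by_cases h1 : (1 : ℕ) ≤ i
      · simp only [h1, true_and]
        exact (measurable_pi_apply i) hA
      · have he : {ω : ℕ → S | 1 ≤ i ∧ ω i ∈ A} = ∅ := by ext; simp [h1]
        rw [he]; exact MeasurableSet.empty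
    have hAev1 : Pr z Aev = 1 := by
      have hs : {ω : ℕ → S | hitTime A ω < ⊤} = Aev :=
        Set.ext fun ω => hitTime_lt_top_iff
      rw [← hs]; exact hhit z
    have hAevc : Pr z Aevᶜ = 0 := by
      rw [prob_compl_eq_one_sub hAevmeas, hAev1, tsub_self]
    set F : ℕ → Set (ℕ → S) := fun N =>
      {ω | ω N ∈ A} ∩ {ω | ∀ i : ℕ, 1 ≤ i → i < N → ω i ∈ Aᶜ} with hFdef
    set W : ℕ → Set (ℕ → S) := fun N => {ω | ∀ i : ℕ, N < i → ω i ∈ Bᶜ} with hWdef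
    have hFmeas : ∀ N, MeasurableSet (F N) := by
      intro N
      refine ((measurable_pi_apply N) hA).inter ?_
      rw [Set.setOf_forall]
      exact MeasurableSet.iInter fun i => measSet_imp₂ _ _ (measurable_pi_apply i) hA.compl
    have hsub : {ω : ℕ → S | ∀ i : ℕ, 1 ≤ i → ω i ∈ Bᶜ} ∩ Aev
        ⊆ ⋃ n : ℕ, (F (n + 1) ∩ W (n + 1)) := by
      rintro ω ⟨hT, i0, hi0, hAi0⟩
      have hex : ∃ i, 1 ≤ i ∧ ω i ∈ A := ⟨i0, hi0, hAi0⟩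
      have hc := Nat.find_spec hex
      have hc1 : 1 ≤ Nat.find hex := hc.1
      refine Set.mem_iUnion.mpr ⟨Nat.find hex - 1, ?_, ?_⟩
      · have hn1 : Nat.find hex - 1 + 1 = Nat.find hex := by omega
        rw [hn1]
        refine ⟨hc.2, fun i h1 h2 => ?_⟩
        exact fun hAi => Nat.find_min hex h2 ⟨h1, hAi⟩
      · intro i hgt
        exact hT i (by omega)
    have hperN : ∀ N : ℕ, 1 ≤ N → Pr z (F N ∩ W N) ≤ u * (1 - ε) * Pr z (F N) := by
      intro N _
      set C : Set (Fin (N + 1) → S) := {v | v (Fin.last N) ∈ A}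
        ∩ {v | ∀ i : Fin (N + 1), 1 ≤ (i : ℕ) → (i : ℕ) < N → v i ∈ Aᶜ} with hCdef
      have hCmeas : MeasurableSet C := by
        refine ((measurable_pi_apply _) hA).inter ?_
        rw [Set.setOf_forall]
        exact MeasurableSet.iInter fun i => measSet_imp₂ _ _ (measurable_pi_apply i) hA.compl
      have hFC : F N = (fun ω : ℕ → S => fun i : Fin (N + 1) => ω (i : ℕ)) ⁻¹' C := by
        ext ω
        constructor
        · rintro ⟨h1, h2⟩
          refine ⟨?_, fun i hi1 hi2 => h2 i hi1 hi2⟩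
          show ω ((Fin.last N : Fin (N + 1)) : ℕ) ∈ A
          simpa using h1
        · rintro ⟨h1, h2⟩
          refine ⟨by simpa using h1, fun i hi1 hi2 => ?_⟩
          have := h2 ⟨i, by omega⟩ (by simpa using hi1) (by simpa using hi2)
          simpa using this
      have hFW : F N ∩ W N = ⋂ m : ℕ,
          ((fun ω : ℕ → S => fun i : Fin (N + 1) => ω (i : ℕ)) ⁻¹' C
            ∩ {ω : ℕ → S | ∀ i : ℕ, N < i → i ≤ N + m → ω i ∈ Bᶜ}) := by
        rw [← hFC]
        ext ω
        simp only [Set.mem_inter_iff, Set.mem_iInter, Set.mem_setOf_eq]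
        constructor
        · rintro ⟨h1, h2⟩ m
          exact ⟨h1, fun i hi1 _ => h2 i hi1⟩
        · intro h
          refine ⟨(h 0).1, fun i hi => ?_⟩
          exact (h (i - N)).2 i hi (by omega)
      have hpiece : ∀ m : ℕ, MeasurableSet
          ((fun ω : ℕ → S => fun i : Fin (N + 1) => ω (i : ℕ)) ⁻¹' C
            ∩ {ω : ℕ → S | ∀ i : ℕ, N < i → i ≤ N + m → ω i ∈ Bᶜ}) := by
        intro m
        refine ((measurable_res N) hCmeas).inter ?_
        rw [Set.setOf_forall]
        exact MeasurableSet.iInter fun i => measSet_imp₂ _ _ (measurable_pi_apply i) hB.compl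
      have hanti : Antitone fun m : ℕ =>
          ((fun ω : ℕ → S => fun i : Fin (N + 1) => ω (i : ℕ)) ⁻¹' C
            ∩ {ω : ℕ → S | ∀ i : ℕ, N < i → i ≤ N + m → ω i ∈ Bᶜ}) := by
        intro a b hab ω hω
        exact ⟨hω.1, fun i h1 h2 => hω.2 i h1 (by omega)⟩
      haveI : IsProbabilityMeasure ((Pr z).map
          (fun ω : ℕ → S => fun i : Fin (N + 1) => ω (i : ℕ))) :=
        Measure.isProbabilityMeasure_map (measurable_res N).aemeasurable
      have hanti2 : Antitone fun m : ℕ => fun v : Fin (N + 1) → S =>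
          kiter PB m (v (Fin.last N)) Set.univ := fun a b hab v => hQanti _ hab
      have hfin2 : ∫⁻ v in C, kiter PB 0 (v (Fin.last N)) Set.univ
          ∂((Pr z).map (fun ω : ℕ → S => fun i : Fin (N + 1) => ω (i : ℕ))) ≠ ⊤ := by
        simp_rw [hQ0]
        rw [setLIntegral_one]
        exact measure_ne_top _ _
      calc Pr z (F N ∩ W N)
          = ⨅ m, Pr z ((fun ω : ℕ → S => fun i : Fin (N + 1) => ω (i : ℕ)) ⁻¹' C
              ∩ {ω : ℕ → S | ∀ i : ℕ, N < i → i ≤ N + m → ω i ∈ Bᶜ}) := by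
            rw [hFW]
            exact Antitone.measure_iInter hanti (fun m => (hpiece m).nullMeasurableSet)
              ⟨0, measure_ne_top _ _⟩
        _ = ⨅ m, ∫⁻ v in C, kiter PB m (v (Fin.last N)) Set.univ
              ∂((Pr z).map (fun ω : ℕ → S => fun i : Fin (N + 1) => ω (i : ℕ))) :=
            iInf_congr fun m => keyM_set P hB (Pr z) hLrec N hCmeas m
        _ = ∫⁻ v in C, Qinf (v (Fin.last N))
              ∂((Pr z).map (fun ω : ℕ → S => fun i : Fin (N + 1) => ω (i : ℕ))) :=
            (lintegral_iInf (fun m => (hQmeas m).comp (measurable_pi_apply _))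
              hanti2 hfin2).symm
        _ ≤ ∫⁻ _ in C, (u * (1 - ε))
              ∂((Pr z).map (fun ω : ℕ → S => fun i : Fin (N + 1) => ω (i : ℕ))) :=
            setLIntegral_mono' hCmeas fun v hv => hAbound _ hv.1
        _ = u * (1 - ε) * Pr z (F N) := by
            rw [setLIntegral_const, Measure.map_apply (measurable_res N) hCmeas, ← hFC]
    have hdisj : Pairwise (Function.onFun Disjoint fun n : ℕ => F (n + 1)) := by
      have key2 : ∀ a b : ℕ, a < b → Disjoint (F (a + 1)) (F (b + 1)) := by
        intro a b hab
        refine Set.disjoint_left.mpr fun ω hωa hωb => ?_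
        exact hωb.2 (a + 1) (by omega) (by omega) hωa.1
      intro a b hab
      rcases hab.lt_or_gt with h | h
      · exact key2 a b h
      · exact (key2 b a h).symm
    have hsum : ∑' n : ℕ, Pr z (F (n + 1)) ≤ 1 := by
      rw [← measure_iUnion hdisj fun n => hFmeas (n + 1)]
      exact prob_le_one
    calc Pr z {ω : ℕ → S | ∀ i : ℕ, 1 ≤ i → ω i ∈ Bᶜ}
        ≤ Pr z (({ω : ℕ → S | ∀ i : ℕ, 1 ≤ i → ω i ∈ Bᶜ} ∩ Aev) ∪ Aevᶜ) := by
          refine measure_mono fun ω hω => ?_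
          by_cases h : ω ∈ Aev
          · exact Or.inl ⟨hω, h⟩
          · exact Or.inr h
      _ ≤ Pr z ({ω : ℕ → S | ∀ i : ℕ, 1 ≤ i → ω i ∈ Bᶜ} ∩ Aev) + Pr z Aevᶜ :=
          measure_union_le _ _
      _ = Pr z ({ω : ℕ → S | ∀ i : ℕ, 1 ≤ i → ω i ∈ Bᶜ} ∩ Aev) := by
          rw [hAevc, add_zero]
      _ ≤ Pr z (⋃ n : ℕ, (F (n + 1) ∩ W (n + 1))) := measure_mono hsub
      _ ≤ ∑' n : ℕ, Pr z (F (n + 1) ∩ W (n + 1)) := measure_iUnion_le _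
      _ ≤ ∑' n : ℕ, u * (1 - ε) * Pr z (F (n + 1)) :=
          ENNReal.tsum_le_tsum fun n => hperN (n + 1) (by omega)
      _ = u * (1 - ε) * ∑' n : ℕ, Pr z (F (n + 1)) := ENNReal.tsum_mul_left
      _ ≤ u * (1 - ε) * 1 := mul_le_mul_right hsum _
      _ = u * (1 - ε) := mul_one _
  -- Step 4 : conclude u = 0
  have hu0 : u = 0 := by
    by_contra h
    have h1 : u ≤ u * (1 - ε) := iSup_le hdec
    have h2 : u * (1 - ε) < u * 1 :=
      (ENNReal.mul_lt_mul_iff_right h (ne_top_of_le_ne_top ENNReal.one_ne_top hule)).mpr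
        (ENNReal.sub_lt_self ENNReal.one_ne_top one_ne_zero hε.ne')
    rw [mul_one] at h2
    exact absurd (h1.trans_lt h2) (lt_irrefl u)
  -- Step 5 : conclusion
  intro x
  haveI := (hPr x).1
  have hTmeas : MeasurableSet {ω : ℕ → S | ∀ i : ℕ, 1 ≤ i → ω i ∈ Bᶜ} := by
    rw [Set.setOf_forall]
    exact MeasurableSet.iInter fun i => measSet_imp _ (measurable_pi_apply i) hB.compl
  have hT0 : Pr x {ω : ℕ → S | ∀ i : ℕ, 1 ≤ i → ω i ∈ Bᶜ} = 0 := by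
    rw [hQeq x]
    exact le_antisymm ((le_iSup Qinf x).trans_eq hu0) (zero_le)
  have hset : {ω : ℕ → S | hitTime B ω < ⊤}
      = {ω : ℕ → S | ∀ i : ℕ, 1 ≤ i → ω i ∈ Bᶜ}ᶜ := by
    ext ω
    simp only [Set.mem_setOf_eq, Set.mem_compl_iff]
    rw [hitTime_lt_top_iff]
    constructor
    · rintro ⟨i, h1, h2⟩ hall
      exact hall i h1 h2
    · intro h
      by_contra hno
      push_neg at hno
      exact h fun i h1 => hno i h1
  rw [hset, prob_compl_eq_one_sub hTmeas, hT0, tsub_zero]
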